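/- arXiv:2112.13435 — 2 statements merged into one kernel-verified Lean document; each statement's English description precedes it below -/
import Mathlib

section
/- Let R be a commutative ring, let N be a finitely generated projective R-module, and let ψ : M → N be an R-linear map such that for every maximal ideal m of R the induced map ψ ⊗ id : M/mM → N/mN is an isomorphism. Then ψ is an isomorphism. -/
open TensorProduct

lemma aux_subsingleton_of_subsingleton_quot {R P : Type*} [CommRing R] [AddCommGroup P]
    [Module R P] [Module.Finite R P]
    (h : ∀ (m : Ideal R), m.IsMaximal → Subsingleton ((R ⧸ m) ⊗[R] P)) :
    Subsingleton P := by
  by_contra hP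
  rw [not_subsingleton_iff_nontrivial] at hP
  have hann : (⊤ : Submodule R P).annihilator ≠ ⊤ := by
    rw [Ne, Submodule.annihilator_eq_top_iff]
    intro e
    obtain ⟨p, q, hpq⟩ := hP
    exact hpq (by
      have hp : p ∈ (⊤ : Submodule R P) := trivial
      have hq : q ∈ (⊤ : Submodule R P) := trivial
      rw [e] at hp hq
      simp only [Submodule.mem_bot] at hp hq
      rw [hp, hq])
  obtain ⟨m, hm, hle⟩ := Ideal.exists_le_maximal _ hann
  have h0 := h m hm
  have h1 : Subsingleton (P ⧸ (m • ⊤ : Submodule R P)) :=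
    (quotTensorEquivQuotSMul P m).symm.injective.subsingleton
  have h2 : (⊤ : Submodule R P) ≤ m • ⊤ := fun x _ => by
    rw [← (Submodule.Quotient.mk_eq_zero (m • (⊤ : Submodule R P)) (x := x))]
    exact Subsingleton.elim _ _
  obtain ⟨r, hr1, hr0⟩ := Submodule.exists_sub_one_mem_and_smul_eq_zero_of_fg_of_le_smul m ⊤
    Module.Finite.fg_top h2
  have hrm : r ∈ m := hle (Submodule.mem_annihilator.mpr fun p hp => hr0 p hp)
  exact hm.ne_top (Ideal.eq_top_of_isUnit_mem _ (Ideal.sub_mem m hrm hr1) (by simp))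

/-- Nakayama-type lemma: if `N` is a finitely generated projective module over a
commutative ring `R` and `ψ : M → N` is an `R`-linear map such that the induced map
`M ⊗ R/m → N ⊗ R/m` is an isomorphism for every maximal ideal `m` of `R`, then `ψ`
is an isomorphism. -/
theorem bijective_of_bijective_mod_maximal
    {R M N : Type*} [CommRing R] [AddCommGroup M] [Module R M]
    [AddCommGroup N] [Module R N]
    [Module.Finite R M] [Module.Finite R N] [Module.Projective R N]
    (ψ : M →ₗ[R] N)
    (h : ∀ (m : Ideal R), m.IsMaximal →
      Function.Bijective (LinearMap.baseChange (R ⧸ m) ψ)) :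
    Function.Bijective ψ := by
  have hsurj : Function.Surjective ψ := by
    have hss : Subsingleton (N ⧸ LinearMap.range ψ) := by
      haveI : Module.Finite R (N ⧸ LinearMap.range ψ) :=
        Module.Finite.of_surjective (LinearMap.range ψ).mkQ (Submodule.mkQ_surjective _)
      apply aux_subsingleton_of_subsingleton_quot (R := R)
      intro m hm
      refine (subsingleton_iff_forall_eq 0).mpr fun y => ?_
      obtain ⟨x, rfl⟩ := LinearMap.lTensor_surjective (R ⧸ m)
        (Submodule.mkQ_surjective (LinearMap.range ψ)) y
      obtain ⟨z, rfl⟩ := (h m hm).2 x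
      have : (LinearMap.range ψ).mkQ ∘ₗ ψ = 0 := by
        ext v; simp
      calc ((LinearMap.range ψ).mkQ.lTensor (R ⧸ m)) ((ψ.baseChange (R ⧸ m)) z)
          = ((LinearMap.range ψ).mkQ.lTensor (R ⧸ m)) ((ψ.lTensor (R ⧸ m)) z) := by
            rw [LinearMap.baseChange_eq_ltensor]
        _ = (((LinearMap.range ψ).mkQ ∘ₗ ψ).lTensor (R ⧸ m)) z := by
            rw [LinearMap.lTensor_comp]; rfl
        _ = 0 := by rw [this, LinearMap.lTensor_zero]; rfl
    rw [← LinearMap.range_eq_top, ← Submodule.Quotient.subsingleton_iff]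
    exact hss
  obtain ⟨s, hs⟩ := Module.projective_lifting_property ψ LinearMap.id hsurj
  have hπ : ∀ x : M, ψ (x - s (ψ x)) = 0 := fun x => by
    have := LinearMap.congr_fun hs (ψ x)
    simp only [LinearMap.comp_apply, LinearMap.id_apply] at this
    simp [map_sub, this]
  let π : M →ₗ[R] LinearMap.ker ψ :=
    (LinearMap.id - s ∘ₗ ψ).codRestrict (LinearMap.ker ψ) (fun x => by
      simpa [LinearMap.mem_ker] using hπ x)
  have hπid : π ∘ₗ (LinearMap.ker ψ).subtype = LinearMap.id := by
    ext ⟨x, hx⟩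
    have : ψ x = 0 := hx
    simp [π, LinearMap.codRestrict, this]
  haveI hfin : Module.Finite R (LinearMap.ker ψ) :=
    Module.Finite.of_surjective π (fun x => ⟨x.1, by
      have := LinearMap.congr_fun hπid x
      simpa using this⟩)
  have hss : Subsingleton (LinearMap.ker ψ) := by
    apply aux_subsingleton_of_subsingleton_quot (R := R)
    intro m hm
    have hinj : Function.Injective ((LinearMap.ker ψ).subtype.lTensor (R ⧸ m)) := by
      have : (π.lTensor (R ⧸ m)) ∘ₗ ((LinearMap.ker ψ).subtype.lTensor (R ⧸ m)) =
          LinearMap.id := by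
        rw [← LinearMap.lTensor_comp, hπid, LinearMap.lTensor_id]
      exact Function.LeftInverse.injective (g := π.lTensor (R ⧸ m))
        (fun y => LinearMap.congr_fun this y)
    refine (subsingleton_iff_forall_eq 0).mpr fun y => ?_
    apply hinj
    apply (h m hm).1
    have hcomp : ψ ∘ₗ (LinearMap.ker ψ).subtype = 0 := by ext ⟨x, hx⟩; exact hx
    calc (ψ.baseChange (R ⧸ m)) (((LinearMap.ker ψ).subtype.lTensor (R ⧸ m)) y)
        = (ψ.lTensor (R ⧸ m)) (((LinearMap.ker ψ).subtype.lTensor (R ⧸ m)) y) := by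
          rw [LinearMap.baseChange_eq_ltensor]
      _ = ((ψ ∘ₗ (LinearMap.ker ψ).subtype).lTensor (R ⧸ m)) y := by
          rw [LinearMap.lTensor_comp]; rfl
      _ = (ψ.baseChange (R ⧸ m)) (((LinearMap.ker ψ).subtype.lTensor (R ⧸ m)) 0) := by
          rw [hcomp, LinearMap.lTensor_zero]; simp
  have hker : LinearMap.ker ψ = ⊥ := by
    rw [Submodule.eq_bot_iff]
    intro x hx
    have := Subsingleton.elim (⟨x, hx⟩ : LinearMap.ker ψ) 0
    simpa using congrArg Subtype.val this
  exact ⟨LinearMap.ker_eq_bot.mp hker, hsurj⟩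
end

section
/- Let A be a ring and J a two-sided ideal of A with J² = J. Then for a left A-module M, the following are equivalent: (1) Hom_A(J, M) = 0; (2) JM = 0; (3) M is (the restriction of) a module over A/J. -/
/-- Let `A` be a ring and `J` a two-sided ideal with `J² = J` (expressed by saying that
`J` is spanned, as a left ideal, by products of two of its elements).  Then for a left
`A`-module `M` the following are equivalent:
(1) every `A`-linear map `J → M` is zero;
(2) `J • M = 0`;
(3) the `A`-action on `M` is the restriction of an `A/J`-module structure. -/
theorem hom_vanish_iff_smul_vanish_iff_quotient_module
    {A M : Type*} [Ring A] [AddCommGroup M] [Module A M]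
    (J : TwoSidedIdeal A)
    (hJ2 : Submodule.span A {z : A | ∃ u ∈ J, ∃ v ∈ J, z = u * v} = TwoSidedIdeal.asIdeal J) :
    List.TFAE
      [ ∀ f : (TwoSidedIdeal.asIdeal J : Ideal A) →ₗ[A] M, f = 0,
        ∀ j ∈ J, ∀ m : M, j • m = 0,
        ∃ inst : Module J.ringCon.Quotient M, ∀ (a : A) (m : M),
          @SMul.smul _ _ inst.toDistribMulAction.toMulAction.toSMul
            (RingCon.mk' J.ringCon a) m = a • m ] := by
  tfae_have 1 → 2
  · intro h1 j hj m
    have hf := h1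
      { toFun := fun x => (x : A) • m
        map_add' := fun x y => by simp [add_smul]
        map_smul' := fun a x => by simp [mul_smul] }
    have := congrFun (congrArg DFunLike.coe hf) ⟨j, TwoSidedIdeal.mem_asIdeal.2 hj⟩
    simpa using this
  tfae_have 2 → 3
  · intro h2
    have key : ∀ a b : A, J.ringCon a b → ∀ m : M, a • m = b • m := by
      intro a b hab m
      have h : (a - b) • m = 0 := h2 _ ((J.rel_iff a b).1 hab) m
      rw [sub_smul, sub_eq_zero] at h
      exact h
    letI instS : SMul J.ringCon.Quotient M :=
      ⟨fun q m => Quotient.liftOn' q (fun a => a • m) (fun a b hab => key a b hab m)⟩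
    letI inst : Module J.ringCon.Quotient M :=
      Function.Surjective.moduleLeft (RingCon.mk' J.ringCon)
        (fun q => Quotient.inductionOn' q (fun a => ⟨a, rfl⟩)) (fun c x => rfl)
    exact ⟨inst, fun a m => rfl⟩
  tfae_have 3 → 1
  · rintro ⟨inst, hcomp⟩ f
    letI := inst
    ext ⟨j, hj⟩
    rw [← hJ2] at hj
    simp only [LinearMap.zero_apply]
    induction hj using Submodule.span_induction with
    | mem z hz =>
      obtain ⟨u, hu, v, hv, rfl⟩ := hz
      have hv' : v ∈ TwoSidedIdeal.asIdeal J := TwoSidedIdeal.mem_asIdeal.2 hv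
      have : (⟨u * v, _⟩ : TwoSidedIdeal.asIdeal J) = u • (⟨v, hv'⟩ : TwoSidedIdeal.asIdeal J) :=
        rfl
      rw [this, map_smul, ← hcomp u (f ⟨v, hv'⟩)]
      have : RingCon.mk' J.ringCon u = 0 := by
        rw [show (0 : J.ringCon.Quotient) = RingCon.mk' J.ringCon 0 from rfl]
        exact Quotient.sound' ((J.rel_iff u 0).2 (by simpa using hu))
      rw [this]
      show (0 : J.ringCon.Quotient) • f ⟨v, hv'⟩ = 0
      exact zero_smul _ _
    | zero => exact map_zero f
    | add x y hx hy ihx ihy => rw [show (⟨x + y, _⟩ : TwoSidedIdeal.asIdeal J) =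
        ⟨x, hJ2 ▸ hx⟩ + ⟨y, hJ2 ▸ hy⟩ from rfl, map_add, ihx, ihy, add_zero]
    | smul a x hx ih => rw [show (⟨a • x, _⟩ : TwoSidedIdeal.asIdeal J) =
        a • ⟨x, hJ2 ▸ hx⟩ from rfl, map_smul, ih, smul_zero]
  tfae_finish
end
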